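/- For every d ≥ 1 and every phase list Φ ∈ ℝ^{d+1} there exist complex polynomials P and Q with deg P ≤ d, deg Q ≤ d−1, P of parity d mod 2, Q of parity (d−1) mod 2, and |P(x)|² + (1−x²)·|Q(x)|² = 1 for all x ∈ [-1,1], such that for all x ∈ [-1,1], U_Φ(x) equals the 2×2 matrix with top-left entry P(x), top-right entry i√(1−x²)·Q(x), bottom-left entry i√(1−x²)·conj(Q(x)), and bottom-right entry conj(P(x)). -/

import Mathlib

open Matrix Polynomial

/-- The single-qubit Z-rotation `Z(φ) = diag(e^{iφ}, e^{-iφ})`. -/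
noncomputable def Zrot (φ : ℝ) : Matrix (Fin 2) (Fin 2) ℂ :=
  !![Complex.exp (Complex.I * (φ : ℂ)), 0; 0, Complex.exp (-(Complex.I * (φ : ℂ)))]

/-- The QSP signal oracle `W(x)`, with diagonal entries `x` and off-diagonal
entries `i·√(1-x²)`. -/
noncomputable def Wosc (x : ℝ) : Matrix (Fin 2) (Fin 2) ℂ :=
  !![(x : ℂ), Complex.I * (Real.sqrt (1 - x ^ 2) : ℂ);
     Complex.I * (Real.sqrt (1 - x ^ 2) : ℂ), (x : ℂ)]

/-- The QSP unitary `U_Φ(x) = Z(φ₀)·W(x)·Z(φ₁)·W(x)·Z(φ₂)⋯W(x)·Z(φ_d)`. -/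
noncomputable def qspU {d : ℕ} (Φ : Fin (d + 1) → ℝ) (x : ℝ) :
    Matrix (Fin 2) (Fin 2) ℂ :=
  Zrot (Φ 0) * (List.ofFn fun k : Fin d => Wosc x * Zrot (Φ k.succ)).prod

/-- The nested QSP unitary `(Φ1 ∘ Φ0)(x)`: the QSP circuit of `Φ1` with each
oracle `W(x)` replaced by `U_{Φ0}(x)`. -/
noncomputable def nestedU {n m : ℕ} (Φ1 : Fin (m + 1) → ℝ) (Φ0 : Fin (n + 1) → ℝ)
    (x : ℝ) : Matrix (Fin 2) (Fin 2) ℂ :=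
  Zrot (Φ1 0) * (List.ofFn fun k : Fin m => qspU Φ0 x * Zrot (Φ1 k.succ)).prod

/-- A phase list `Φ = (φ_0, …, φ_d)` is antisymmetric if `φ_k = -φ_{d-k}` for all `k`. -/
def Antisym {d : ℕ} (Φ : Fin (d + 1) → ℝ) : Prop := ∀ k, Φ (Fin.rev k) = -Φ k

/-- A polynomial has parity `m mod 2` if only monomials of degree congruent to `m`
modulo 2 have nonzero coefficients. -/
def HasParity {R : Type*} [Semiring R] (m : ℕ) (P : Polynomial R) : Prop :=
  ∀ k, k % 2 ≠ m % 2 → P.coeff k = 0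

lemma normSq_expI (φ : ℝ) : Complex.normSq (Complex.exp (Complex.I * φ)) = 1 := by
  rw [Complex.normSq_eq_norm_sq, Complex.norm_exp]
  simp [Complex.mul_re]

lemma conj_expI (φ : ℝ) :
    (starRingEnd ℂ) (Complex.exp (Complex.I * φ)) = Complex.exp (-(Complex.I * φ)) := by
  rw [← Complex.exp_conj]
  congr 1
  have : (starRingEnd ℂ) (Complex.I * (φ : ℂ)) =
      (starRingEnd ℂ) Complex.I * (starRingEnd ℂ) (φ : ℂ) := by
    exact RingHom.map_mul _ _ _
  rw [this, Complex.conj_I, Complex.conj_ofReal]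
  ring

lemma qsp_split (d : ℕ) (Φ : Fin (d + 2) → ℝ) (x : ℝ) :
    qspU Φ x = qspU (fun k : Fin (d + 1) => Φ k.castSucc) x *
      (Wosc x * Zrot (Φ (Fin.last (d + 1)))) := by
  simp only [qspU]
  rw [List.ofFn_succ' (fun k : Fin (d+1) => Wosc x * Zrot (Φ k.succ)),
    List.concat_eq_append, List.prod_append, List.prod_cons, List.prod_nil,
    mul_one, ← mul_assoc]
  simp [-Fin.castSucc_succ, Fin.succ_castSucc, Fin.succ_last, Fin.castSucc_zero]

lemma qsp_aux (d : ℕ) (Φ : Fin (d + 1) → ℝ) :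
    ∃ P Q : Polynomial ℂ,
      P.degree ≤ (d : WithBot ℕ) ∧ Q.degree < (d : WithBot ℕ) ∧
      HasParity d P ∧ HasParity (d + 1) Q ∧
      (∀ x ∈ Set.Icc (-1 : ℝ) 1,
        Complex.normSq (P.eval (x : ℂ)) +
          (1 - x ^ 2) * Complex.normSq (Q.eval (x : ℂ)) = 1) ∧
      ∀ x ∈ Set.Icc (-1 : ℝ) 1,
        qspU Φ x =
          !![P.eval (x : ℂ),
             Complex.I * (Real.sqrt (1 - x ^ 2) : ℂ) * Q.eval (x : ℂ);
             Complex.I * (Real.sqrt (1 - x ^ 2) : ℂ) *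
               (starRingEnd ℂ) (Q.eval (x : ℂ)),
             (starRingEnd ℂ) (P.eval (x : ℂ))] := by
  induction d with
  | zero =>
    refine ⟨C (Complex.exp (Complex.I * (Φ 0 : ℂ))), 0, degree_C_le, ?_, ?_, ?_, ?_, ?_⟩
    · simpa using (WithBot.bot_lt_coe 0)
    · intro k hk
      rw [coeff_C, if_neg (by omega)]
    · intro k hk; simp
    · intro x hx
      simp [normSq_expI]
    · intro x hx
      have : (List.ofFn fun k : Fin 0 => Wosc x * Zrot (Φ k.succ)) = [] := by simp
      rw [qspU, this, List.prod_nil, mul_one, Zrot]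
      simp [conj_expI]
  | succ d ih =>
    obtain ⟨P, Q, hPdeg, hQdeg, hPpar, hQpar, hnorm, hmat⟩ :=
      ih (fun k : Fin (d + 1) => Φ k.castSucc)
    set φ := Φ (Fin.last (d + 1)) with hφ
    set e : ℂ := Complex.exp (Complex.I * φ) with he
    set e' : ℂ := Complex.exp (-(Complex.I * φ)) with he'
    have hce : (starRingEnd ℂ) e = e' := conj_expI φ
    have hce' : (starRingEnd ℂ) e' = e := by
      have := congrArg (starRingEnd ℂ) hce
      rwa [Complex.conj_conj, eq_comm] at this
    refine ⟨C e * (X * P - (1 - X ^ 2) * Q), C e' * (P + X * Q), ?_, ?_, ?_, ?_, ?_, ?_⟩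
    · -- degree of P'
      refine le_trans (degree_mul_le _ _) ?_
      refine le_trans (add_le_add degree_C_le (degree_sub_le _ _)) ?_
      rw [zero_add]
      have h1 : (X * P).degree ≤ ((d + 1 : ℕ) : WithBot ℕ) := by
        refine le_trans (degree_mul_le _ _) ?_
        have := add_le_add (degree_X_le (R := ℂ)) hPdeg
        refine le_trans this ?_
        rw [Nat.cast_add, Nat.cast_one]
        exact le_of_eq (add_comm 1 (d : WithBot ℕ))
      have h2 : ((1 - X ^ 2) * Q).degree ≤ ((d + 1 : ℕ) : WithBot ℕ) := by
        refine le_trans (degree_mul_le _ _) ?_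
        have hdeg2 : (1 - X ^ 2 : ℂ[X]).degree ≤ (2 : WithBot ℕ) := by
          refine le_trans (degree_sub_le _ _) ?_
          simp [degree_one, degree_X_pow]
        have hq1 : Q.degree + 1 ≤ (d : WithBot ℕ) := Nat.WithBot.add_one_le_of_lt hQdeg
        calc (1 - X ^ 2 : ℂ[X]).degree + Q.degree ≤ 2 + Q.degree :=
              add_le_add_left hdeg2 _
          _ = 1 + (Q.degree + 1) := by ring
          _ ≤ 1 + (d : WithBot ℕ) := add_le_add_right hq1 _
          _ = ((d + 1 : ℕ) : WithBot ℕ) := by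
              rw [Nat.cast_add, Nat.cast_one]; ring
      exact max_le h1 h2
    · -- degree of Q'
      refine lt_of_le_of_lt (degree_mul_le _ _) ?_
      refine lt_of_le_of_lt (add_le_add degree_C_le (degree_add_le _ _)) ?_
      rw [zero_add]
      have hc : ((d : WithBot ℕ)) < ((d + 1 : ℕ) : WithBot ℕ) := by
        exact_mod_cast Nat.lt_succ_self d
      refine max_lt (lt_of_le_of_lt hPdeg hc) ?_
      refine lt_of_le_of_lt (degree_mul_le _ _) ?_
      refine lt_of_le_of_lt (add_le_add_left degree_X_le _) ?_
      have : (1 : WithBot ℕ) + Q.degree < 1 + (d : WithBot ℕ) :=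
        WithBot.add_lt_add_left (by simp) hQdeg
      refine lt_of_lt_of_le this ?_
      rw [Nat.cast_add, Nat.cast_one]
      exact le_of_eq (by ring)
    · -- parity of P'
      intro k hk
      have h1X2 : (1 - X ^ 2 : ℂ[X]) * Q = Q - X * (X * Q) := by ring
      rw [coeff_C_mul, coeff_sub, h1X2, coeff_sub]
      match k, hk with
      | 0, hk =>
        rw [mul_coeff_zero, mul_coeff_zero, coeff_X_zero, zero_mul, zero_mul,
          hQpar 0 (by omega)]
        ring
      | 1, hk =>
        rw [coeff_X_mul, coeff_X_mul, mul_coeff_zero, coeff_X_zero, zero_mul,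
          hPpar 0 (by omega), hQpar 1 (by omega)]
        ring
      | (k + 2), hk =>
        rw [coeff_X_mul, coeff_X_mul, coeff_X_mul,
          hPpar (k + 1) (by omega), hQpar k (by omega), hQpar (k + 2) (by omega)]
        ring
    · -- parity of Q'
      intro k hk
      rw [coeff_C_mul, coeff_add]
      match k, hk with
      | 0, hk =>
        rw [mul_coeff_zero, coeff_X_zero, zero_mul, hPpar 0 (by omega)]
        ring
      | (k + 1), hk =>
        rw [coeff_X_mul, hPpar (k + 1) (by omega), hQpar k (by omega)]
        ring
    · -- norm condition
      intro x hx
      have hp := hnorm x hx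
      have hnse : Complex.normSq e = 1 := normSq_expI φ
      have hnse' : Complex.normSq e' = 1 := by
        rw [← hce, Complex.normSq_conj]; exact hnse
      simp only [eval_mul, eval_C, eval_sub, eval_add, eval_one, eval_pow, eval_X,
        Complex.normSq_mul, hnse, hnse', one_mul]
      set p := P.eval (x : ℂ)
      set q := Q.eval (x : ℂ)
      have hone : (1 - (x : ℂ) ^ 2) = ((1 - x ^ 2 : ℝ) : ℂ) := by push_cast; ring
      rw [hone]
      have expand : Complex.normSq ((x : ℂ) * p - ((1 - x ^ 2 : ℝ) : ℂ) * q) +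
          (1 - x ^ 2) * Complex.normSq (p + (x : ℂ) * q) =
          Complex.normSq p + (1 - x ^ 2) * Complex.normSq q := by
        simp only [Complex.normSq_apply, Complex.sub_re, Complex.sub_im,
          Complex.add_re, Complex.add_im, Complex.mul_re, Complex.mul_im,
          Complex.ofReal_re, Complex.ofReal_im]
        ring
      rw [expand, hp]
    · -- matrix identity
      intro x hx
      have hx1 : (0 : ℝ) ≤ 1 - x ^ 2 := by
        rcases hx with ⟨h1, h2⟩; nlinarith [mul_nonneg (by linarith : (0:ℝ) ≤ 1 + x) (by linarith : (0:ℝ) ≤ 1 - x)]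
      set s : ℂ := ((Real.sqrt (1 - x ^ 2) : ℝ) : ℂ) with hs
      have hs2 : s ^ 2 = 1 - (x : ℂ) ^ 2 := by
        rw [hs, ← Complex.ofReal_pow, Real.sq_sqrt hx1]
        push_cast; ring
      have hIs : Complex.I * s * (Complex.I * s) = (x : ℂ) ^ 2 - 1 := by
        have hI := Complex.I_sq
        linear_combination Complex.I ^ 2 * hs2 + (1 - (x : ℂ) ^ 2) * hI
      rw [qsp_split d Φ x, hmat x hx]
      set p := P.eval (x : ℂ)
      set q := Q.eval (x : ℂ)
      have hep : ((C e * (X * P - (1 - X ^ 2) * Q)).eval (x : ℂ)) =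
          e * ((x : ℂ) * p - (1 - (x : ℂ) ^ 2) * q) := by
        simp [p, q]
      have heq : ((C e' * (P + X * Q)).eval (x : ℂ)) =
          e' * (p + (x : ℂ) * q) := by
        simp [p, q]
      have hcp : (starRingEnd ℂ) ((C e * (X * P - (1 - X ^ 2) * Q)).eval (x : ℂ)) =
          e' * ((x : ℂ) * (starRingEnd ℂ) p - (1 - (x : ℂ) ^ 2) * (starRingEnd ℂ) q) := by
        rw [hep, _root_.map_mul, hce, map_sub, _root_.map_mul, _root_.map_mul, map_sub,
          _root_.map_one, map_pow, Complex.conj_ofReal]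
      have hcq : (starRingEnd ℂ) ((C e' * (P + X * Q)).eval (x : ℂ)) =
          e * ((starRingEnd ℂ) p + (x : ℂ) * (starRingEnd ℂ) q) := by
        rw [heq, _root_.map_mul, hce', map_add, _root_.map_mul, Complex.conj_ofReal]
      rw [hcp, hcq, hep, heq]
      rw [Zrot, ← hφ, ← he, ← he', Wosc, ← hs, Matrix.mul_fin_two, Matrix.mul_fin_two]
      ext i j
      fin_cases i <;> fin_cases j <;>
        simp only [Matrix.of_apply, Fin.isValue, Fin.zero_eta, Fin.mk_one, Matrix.cons_val',
          Matrix.cons_val_zero, Matrix.empty_val', Matrix.cons_val_fin_one, Matrix.cons_val_one,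
          Matrix.head_cons, Matrix.head_fin_const] <;>
        first
          | linear_combination q * e * hIs
          | linear_combination (starRingEnd ℂ) q * e' * hIs
          | ring

/-- forward direction of QSP: every QSP phase list embeds a
pair of polynomials `(P, Q)` of the stated degrees, parities and norm
condition in the unitary `U_Φ(x)`. -/
theorem qsp_forward (d : ℕ) (hd : 1 ≤ d) (Φ : Fin (d + 1) → ℝ) :
    ∃ P Q : Polynomial ℂ,
      P.degree ≤ (d : WithBot ℕ) ∧ Q.degree ≤ ((d - 1 : ℕ) : WithBot ℕ) ∧
      HasParity d P ∧ HasParity (d - 1) Q ∧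
      (∀ x ∈ Set.Icc (-1 : ℝ) 1,
        Complex.normSq (P.eval (x : ℂ)) +
          (1 - x ^ 2) * Complex.normSq (Q.eval (x : ℂ)) = 1) ∧
      ∀ x ∈ Set.Icc (-1 : ℝ) 1,
        qspU Φ x =
          !![P.eval (x : ℂ),
             Complex.I * (Real.sqrt (1 - x ^ 2) : ℂ) * Q.eval (x : ℂ);
             Complex.I * (Real.sqrt (1 - x ^ 2) : ℂ) *
               (starRingEnd ℂ) (Q.eval (x : ℂ)),
             (starRingEnd ℂ) (P.eval (x : ℂ))] := by
  obtain ⟨P, Q, hPdeg, hQdeg, hPpar, hQpar, hnorm, hmat⟩ := qsp_aux d Φ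
  refine ⟨P, Q, hPdeg, ?_, hPpar, ?_, hnorm, hmat⟩
  · rw [degree_le_iff_coeff_zero]
    rw [degree_lt_iff_coeff_zero] at hQdeg
    intro m hm
    apply hQdeg
    have hdm : (d - 1 : ℕ) < m := by exact_mod_cast hm
    omega
  · intro k hk
    exact hQpar k (by omega)
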